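/- Let n ≥ 1, let 0 < τ_1 ≤ τ_2 ≤ … ≤ τ_n be real numbers, and let S > 0 be real. Set t' = 2·(τ_n + (1/n ∑_{i=1}^n τ_i)·S/n). Then there exist natural numbers B_1,…,B_n with B_i ≥ 1 for all i, τ_i·(1 + B_i) ≤ 2·t' for all i ∈ {1,…,n}, and (1/n ∑_{i=1}^n 1/B_i)^{-1} ≥ S/n. -/

import Mathlib

open Finset

theorem stmt4 (n : ℕ) (hn : 1 ≤ n) (τ : ℕ → ℝ)
    (hpos : ∀ i, 1 ≤ i → i ≤ n → 0 < τ i)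
    (hmono : ∀ i j, 1 ≤ i → i ≤ j → j ≤ n → τ i ≤ τ j)
    (S : ℝ) (hS : 0 < S)
    (t' : ℝ)
    (ht' : t' = 2 * (τ n + ((1/(n : ℝ)) * ∑ i ∈ Finset.Icc 1 n, τ i) * S / n)) :
    ∃ B : ℕ → ℕ,
      (∀ i ∈ Finset.Icc 1 n, 1 ≤ B i) ∧
      (∀ i ∈ Finset.Icc 1 n, τ i * (1 + (B i : ℝ)) ≤ 2 * t') ∧
      S / n ≤ ((1/(n : ℝ)) * ∑ i ∈ Finset.Icc 1 n, 1/(B i : ℝ))⁻¹ := by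
  have hn' : (0:ℝ) < n := by exact_mod_cast hn
  have hτn : 0 < τ n := hpos n hn le_rfl
  set T : ℝ := ∑ i ∈ Finset.Icc 1 n, τ i with hT
  have hTpos : 0 < T := by
    apply Finset.sum_pos
    · intro i hi
      rw [Finset.mem_Icc] at hi
      exact hpos i hi.1 hi.2
    · exact ⟨n, Finset.mem_Icc.mpr ⟨hn, le_rfl⟩⟩
  have ht'2 : t' = 2 * τ n + 2 * T * S / n ^ 2 := by
    rw [ht']; field_simp
  have hextra : 0 < 2 * T * S / n ^ 2 := by positivity
  have ht'pos : 0 < t' := by rw [ht'2]; nlinarith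
  have ht'ge : 2 * τ n ≤ t' := by rw [ht'2]; linarith
  -- the batch sizes
  refine ⟨fun i => ⌊t' / τ i⌋₊, ?_, ?_, ?_⟩
  · intro i hi
    rw [Finset.mem_Icc] at hi
    have hτi : 0 < τ i := hpos i hi.1 hi.2
    have h2 : (2:ℝ) ≤ t' / τ i := by
      rw [le_div_iff₀ hτi]
      calc (2:ℝ) * τ i ≤ 2 * τ n := by
            have := hmono i n hi.1 hi.2 le_rfl; linarith
        _ ≤ t' := ht'ge
    have : (1:ℕ) ≤ ⌊t' / τ i⌋₊ := Nat.le_floor (by exact_mod_cast (by linarith : (1:ℝ) ≤ t' / τ i))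
    exact this
  · intro i hi
    rw [Finset.mem_Icc] at hi
    have hτi : 0 < τ i := hpos i hi.1 hi.2
    have hfl : (⌊t' / τ i⌋₊ : ℝ) ≤ t' / τ i := Nat.floor_le (by positivity)
    have hτin : τ i ≤ τ n := hmono i n hi.1 hi.2 le_rfl
    have : τ i * (1 + (⌊t' / τ i⌋₊ : ℝ)) ≤ τ i * (1 + t' / τ i) := by nlinarith
    calc τ i * (1 + (⌊t' / τ i⌋₊ : ℝ)) ≤ τ i * (1 + t' / τ i) := this
      _ = τ i + t' := by field_simp
      _ ≤ 2 * t' := by linarith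
  · -- harmonic mean bound
    have key : ∀ i ∈ Finset.Icc 1 n, 1 / ((⌊t' / τ i⌋₊ : ℕ) : ℝ) ≤ 2 * τ i / t' := by
      intro i hi
      rw [Finset.mem_Icc] at hi
      have hτi : 0 < τ i := hpos i hi.1 hi.2
      have h2 : (2:ℝ) ≤ t' / τ i := by
        rw [le_div_iff₀ hτi]
        have := hmono i n hi.1 hi.2 le_rfl
        linarith
      have hlow : t' / τ i / 2 < (⌊t' / τ i⌋₊ : ℝ) := by
        have h1 : t' / τ i - 1 < (⌊t' / τ i⌋₊ : ℝ) := Nat.sub_one_lt_floor _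
        linarith
      have hBpos : (0:ℝ) < (⌊t' / τ i⌋₊ : ℝ) := lt_trans (by positivity) hlow
      rw [div_le_div_iff₀ hBpos ht'pos]
      have := mul_le_mul_of_nonneg_left hlow.le (le_of_lt hτi)
      calc (1:ℝ) * t' = τ i * (t' / τ i / 2) * 2 := by field_simp
        _ ≤ τ i * (⌊t' / τ i⌋₊ : ℝ) * 2 := by nlinarith
        _ = 2 * τ i * (⌊t' / τ i⌋₊ : ℝ) := by ring
    have hsum : ∑ i ∈ Finset.Icc 1 n, 1 / ((⌊t' / τ i⌋₊ : ℕ) : ℝ)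
        ≤ (n:ℝ)^2 / S := by
      calc ∑ i ∈ Finset.Icc 1 n, 1 / ((⌊t' / τ i⌋₊ : ℕ) : ℝ)
          ≤ ∑ i ∈ Finset.Icc 1 n, 2 * τ i / t' := Finset.sum_le_sum key
        _ = 2 * T / t' := by rw [hT, ← Finset.sum_div, ← Finset.mul_sum]
        _ ≤ (n:ℝ)^2 / S := by
            rw [div_le_div_iff₀ ht'pos hS]
            have : 2 * T * S / n ^ 2 ≤ t' := by rw [ht'2]; nlinarith
            have := mul_le_mul_of_nonneg_left this (le_of_lt (by positivity : (0:ℝ) < (n:ℝ)^2))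
            calc 2 * T * S = (n:ℝ)^2 * (2 * T * S / n^2) := by field_simp
              _ ≤ (n:ℝ)^2 * t' := this
        
    have hXpos : 0 < (1/(n : ℝ)) * ∑ i ∈ Finset.Icc 1 n, 1/((⌊t' / τ i⌋₊ : ℕ) : ℝ) := by
      apply mul_pos (by positivity)
      apply Finset.sum_pos
      · intro i hi
        rw [Finset.mem_Icc] at hi
        have hτi : 0 < τ i := hpos i hi.1 hi.2
        have h2 : (2:ℝ) ≤ t' / τ i := by
          rw [le_div_iff₀ hτi]
          have := hmono i n hi.1 hi.2 le_rfl
          linarith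
        have : (1:ℕ) ≤ ⌊t' / τ i⌋₊ := Nat.le_floor (by exact_mod_cast (by linarith : (1:ℝ) ≤ t' / τ i))
        positivity
      · exact ⟨n, Finset.mem_Icc.mpr ⟨hn, le_rfl⟩⟩
    have hle : (1/(n : ℝ)) * ∑ i ∈ Finset.Icc 1 n, 1/((⌊t' / τ i⌋₊ : ℕ) : ℝ) ≤ n / S := by
      calc (1/(n : ℝ)) * ∑ i ∈ Finset.Icc 1 n, 1/((⌊t' / τ i⌋₊ : ℕ) : ℝ)
          ≤ (1/(n : ℝ)) * ((n:ℝ)^2 / S) := by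
            apply mul_le_mul_of_nonneg_left hsum (by positivity)
        _ = n / S := by field_simp
    show S / (n:ℝ) ≤ ((1/(n : ℝ)) * ∑ i ∈ Finset.Icc 1 n, 1/((⌊t' / τ i⌋₊ : ℕ) : ℝ))⁻¹
    calc S / (n:ℝ) = ((n:ℝ) / S)⁻¹ := by rw [inv_div]
      _ ≤ _ := by
          apply inv_anti₀ hXpos hle
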